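/- Let L be a nonnegative random variable with an asymptotically exponential tail with decay rate μ > 0, and let c > 0 and k ∈ (0, 1] be constants. Then lim_{n→∞} (log E[(1 − k e^{−cL})^n]) / (log n) = −μ/c. -/

import Mathlib

open MeasureTheory Filter

lemma integral_bounds {Ω : Type*} {mΩ : MeasurableSpace Ω} (P : Measure Ω)
    [IsProbabilityMeasure P] (L : Ω → ℝ) (hLm : Measurable L) (hLnn : ∀ ω, 0 ≤ L ω)
    (c k : ℝ) (hc : 0 < c) (hk0 : 0 < k) (hk1 : k ≤ 1) (n : ℕ) {x : ℝ} (hx : 0 ≤ x) :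
    (P {ω | L ω > x}).toReal * (1 - k * Real.exp (-(c * x))) ^ n ≤
      (∫ ω, (1 - k * Real.exp (-(c * L ω))) ^ n ∂P) ∧
    (∫ ω, (1 - k * Real.exp (-(c * L ω))) ^ n ∂P) ≤
      (1 - k * Real.exp (-(c * x))) ^ n + (P {ω | L ω > x}).toReal := by
  have hs : MeasurableSet {ω | L ω > x} := measurableSet_lt measurable_const hLm
  have hb0 : ∀ ω, 0 ≤ 1 - k * Real.exp (-(c * L ω)) := by
    intro ω
    have h1 : Real.exp (-(c * L ω)) ≤ 1 :=
      Real.exp_le_one_iff.2 (by nlinarith [hLnn ω])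
    nlinarith [Real.exp_pos (-(c * L ω))]
  have hb1 : ∀ ω, 1 - k * Real.exp (-(c * L ω)) ≤ 1 := by
    intro ω; nlinarith [Real.exp_pos (-(c * L ω))]
  have ha0 : 0 ≤ 1 - k * Real.exp (-(c * x)) := by
    have h1 : Real.exp (-(c * x)) ≤ 1 := Real.exp_le_one_iff.2 (by nlinarith)
    nlinarith [Real.exp_pos (-(c * x))]
  have hm : Measurable fun ω => (1 - k * Real.exp (-(c * L ω))) ^ n :=
    (measurable_const.sub (((hLm.const_mul c).neg.exp).const_mul k)).pow_const n
  have hint : Integrable (fun ω => (1 - k * Real.exp (-(c * L ω))) ^ n) P :=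
    (integrable_const (1:ℝ)).mono' hm.aestronglyMeasurable (ae_of_all _ fun ω => by
      rw [Real.norm_eq_abs, abs_of_nonneg (pow_nonneg (hb0 ω) n)]
      exact pow_le_one₀ (hb0 ω) (hb1 ω))
  constructor
  · have hle : ∀ ω, ({ω | L ω > x}).indicator
        (fun _ => (1 - k * Real.exp (-(c * x))) ^ n) ω ≤ (1 - k * Real.exp (-(c * L ω))) ^ n := by
      intro ω
      by_cases hω : ω ∈ {ω | L ω > x}
      · rw [Set.indicator_of_mem hω]
        refine pow_le_pow_left₀ ha0 ?_ n
        have : Real.exp (-(c * L ω)) ≤ Real.exp (-(c * x)) := by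
          apply Real.exp_le_exp.2
          have : x < L ω := hω
          nlinarith
        nlinarith
      · rw [Set.indicator_of_notMem hω]
        exact pow_nonneg (hb0 ω) n
    have h := integral_mono (((integrable_const _)).indicator hs) hint hle
    rwa [integral_indicator_const _ hs, smul_eq_mul] at h
  · have hle2 : ∀ ω, (1 - k * Real.exp (-(c * L ω))) ^ n ≤
        (1 - k * Real.exp (-(c * x))) ^ n + ({ω | L ω > x}).indicator (fun _ => (1:ℝ)) ω := by
      intro ω
      by_cases hω : ω ∈ {ω | L ω > x}
      · rw [Set.indicator_of_mem hω]
        have h1 : (1 - k * Real.exp (-(c * L ω))) ^ n ≤ 1 := pow_le_one₀ (hb0 ω) (hb1 ω)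
        have h2 : 0 ≤ (1 - k * Real.exp (-(c * x))) ^ n := pow_nonneg ha0 n
        linarith
      · rw [Set.indicator_of_notMem hω]
        have hLx : L ω ≤ x := le_of_not_gt hω
        have : Real.exp (-(c * x)) ≤ Real.exp (-(c * L ω)) := by
          apply Real.exp_le_exp.2; nlinarith
        have : 1 - k * Real.exp (-(c * L ω)) ≤ 1 - k * Real.exp (-(c * x)) := by nlinarith
        have := pow_le_pow_left₀ (hb0 ω) this n
        linarith
    have h := integral_mono hint ((integrable_const _).add ((integrable_const _).indicator hs)) hle2
    simp only [Pi.add_apply] at h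
    rwa [integral_add (integrable_const _) ((integrable_const _).indicator hs), integral_const,
      probReal_univ, one_smul, integral_indicator_const _ hs, smul_eq_mul,
      mul_one] at h

set_option maxHeartbeats 1000000 in
/-- The general power-law asymptotic underlying Proposition 1:
`E[(1 - k e^{-cL})^n]` decays as a power law of index `μ/c`. -/
theorem stmt2 {Ω : Type*} {mΩ : MeasurableSpace Ω} (P : Measure Ω) [IsProbabilityMeasure P]
    (L : Ω → ℝ) (hLm : Measurable L) (hLnn : ∀ ω, 0 ≤ L ω)
    (μ c k : ℝ) (hμ : 0 < μ) (hc : 0 < c) (hk0 : 0 < k) (hk1 : k ≤ 1)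
    (htail : Tendsto (fun x : ℝ => Real.log (P {ω | L ω > x}).toReal / x) atTop (nhds (-μ))) :
    Tendsto (fun n : ℕ =>
        Real.log (∫ ω, (1 - k * Real.exp (-(c * L ω))) ^ n ∂P) / Real.log n) atTop
      (nhds (-(μ / c))) := by
  rw [Metric.tendsto_nhds]
  intro ε' hε'
  set ε : ℝ := min (μ/2) (c*ε'/4) with hεdef
  have hε0 : 0 < ε := lt_min (by linarith) (by positivity)
  have hεμ : ε ≤ μ/2 := min_le_left _ _
  have hεc : ε ≤ c*ε'/4 := min_le_right _ _
  set δ : ℝ := min (1/2) (c*ε'/(4*μ)) with hδdef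
  have hδ0 : 0 < δ := lt_min (by norm_num) (by positivity)
  have hδ2 : δ ≤ 1/2 := min_le_left _ _
  have hδμ : μ * δ ≤ c*ε'/4 := by
    have h := min_le_right (1/2 : ℝ) (c*ε'/(4*μ))
    rw [le_div_iff₀ (by positivity)] at h
    nlinarith
  -- tail bounds
  obtain ⟨X0, hX0⟩ := eventually_atTop.1 (Metric.tendsto_nhds.1 htail ε hε0)
  set X : ℝ := max X0 1 with hXdef
  have hX1 : (1:ℝ) ≤ X := le_max_right _ _
  have htb : ∀ x : ℝ, X ≤ x →
      Real.exp (-((μ+ε)*x)) ≤ (P {ω | L ω > x}).toReal ∧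
      (P {ω | L ω > x}).toReal ≤ Real.exp (-((μ-ε)*x)) := by
    intro x hxX
    have hx0 : (0:ℝ) < x := lt_of_lt_of_le one_pos (hX1.trans hxX)
    have hd := hX0 x (le_trans (le_max_left _ _) hxX)
    rw [Real.dist_eq] at hd
    have hTnn : 0 ≤ (P {ω | L ω > x}).toReal := ENNReal.toReal_nonneg
    have hTpos : 0 < (P {ω | L ω > x}).toReal := by
      rcases hTnn.lt_or_eq with h | h
      · exact h
      · exfalso
        rw [← h, Real.log_zero, zero_div, zero_sub, neg_neg, abs_of_pos hμ] at hd
        linarith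
    have habs := abs_lt.1 hd
    have hl : (-(μ+ε)) * x < Real.log (P {ω | L ω > x}).toReal :=
      (lt_div_iff₀ hx0).1 (by linarith [habs.1])
    have hr : Real.log (P {ω | L ω > x}).toReal < (-(μ-ε)) * x :=
      (div_lt_iff₀ hx0).1 (by linarith [habs.2])
    constructor
    · rw [← Real.exp_log hTpos]
      exact Real.exp_le_exp.2 (by nlinarith)
    · rw [← Real.exp_log hTpos]
      exact Real.exp_le_exp.2 (by nlinarith)
  -- eventualities in n
  have hcast : Tendsto (fun n : ℕ => (n:ℝ)) atTop atTop := tendsto_natCast_atTop_atTop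
  have hlogT : Tendsto (fun n : ℕ => Real.log n) atTop atTop :=
    Real.tendsto_log_atTop.comp hcast
  have e1 : ∀ᶠ n : ℕ in atTop, c * X ≤ Real.log n := hlogT.eventually_ge_atTop _
  have e2 : ∀ᶠ n : ℕ in atTop, c * X / (1-δ) ≤ Real.log n := hlogT.eventually_ge_atTop _
  have e3 : ∀ᶠ n : ℕ in atTop, 8*k/ε' ≤ Real.log n := hlogT.eventually_ge_atTop _
  have e4 : ∀ᶠ n : ℕ in atTop, Real.log 2 * 4/ε' ≤ Real.log n := hlogT.eventually_ge_atTop _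
  have e5 : ∀ᶠ n : ℕ in atTop, 2*k ≤ (n:ℝ) := hcast.eventually_ge_atTop _
  have e6 : ∀ᶠ n : ℕ in atTop, 2 ≤ n := eventually_ge_atTop 2
  have e7 : ∀ᶠ n : ℕ in atTop, Real.log n / (n:ℝ)^δ < k*c/μ := by
    have h := (isLittleO_log_rpow_atTop hδ0).tendsto_div_nhds_zero
    exact (h.comp hcast).eventually_lt_const (by positivity)
  filter_upwards [e1, e2, e3, e4, e5, e6, e7] with n h1 h2 h3 h4 h5 h6 h7
  have hn2 : (2:ℝ) ≤ n := by exact_mod_cast h6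
  have hn0 : (0:ℝ) < n := by linarith
  have hn1 : (1:ℝ) < n := by linarith
  have hLn : 0 < Real.log n := Real.log_pos hn1
  set F := ∫ ω, (1 - k * Real.exp (-(c * L ω))) ^ n ∂P with hF
  -- ### lower bound
  set x₁ : ℝ := Real.log n / c with hx₁
  have hcx₁ : c * x₁ = Real.log n := by rw [hx₁]; field_simp
  have hx₁X : X ≤ x₁ := by rw [hx₁, le_div_iff₀ hc]; linarith
  have hx₁0 : 0 ≤ x₁ := le_trans (by linarith) hx₁X
  have hlb := (integral_bounds P L hLm hLnn c k hc hk0 hk1 n hx₁0).1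
  have hexp1 : Real.exp (-(c * x₁)) = ((n:ℝ))⁻¹ := by
    rw [hcx₁, Real.exp_neg, Real.exp_log hn0]
  rw [hexp1] at hlb
  have htail1 := (htb x₁ hx₁X).1
  have ht0 : 0 < k * ((n:ℝ))⁻¹ := by positivity
  have ht2 : k * ((n:ℝ))⁻¹ ≤ 1/2 := by
    rw [show k * ((n:ℝ))⁻¹ = k / n from (div_eq_mul_inv k _).symm, div_le_iff₀ hn0]
    linarith
  have ha₁0 : 0 < 1 - k * ((n:ℝ))⁻¹ := by linarith
  have hFlb : Real.exp (-((μ+ε)*x₁)) * (1 - k*((n:ℝ))⁻¹)^n ≤ F :=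
    le_trans (mul_le_mul_of_nonneg_right htail1 (pow_nonneg ha₁0.le n)) hlb
  have hFpos : 0 < F := lt_of_lt_of_le (by positivity) hFlb
  have hloga : -(2*(k*((n:ℝ))⁻¹)) ≤ Real.log (1 - k*((n:ℝ))⁻¹) := by
    have h := Real.one_sub_inv_le_log_of_pos ha₁0
    have hi : (1 - k*((n:ℝ))⁻¹)⁻¹ ≤ 2 := by
      have h2' : (1/2:ℝ) ≤ 1 - k*((n:ℝ))⁻¹ := by linarith
      have := inv_anti₀ (by norm_num : (0:ℝ) < 1/2) h2'
      norm_num at this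
      linarith
    have hkey : 1 - (1 - k*((n:ℝ))⁻¹)⁻¹ = -((k*((n:ℝ))⁻¹) * (1 - k*((n:ℝ))⁻¹)⁻¹) := by
      linear_combination (-1 : ℝ) * mul_inv_cancel₀ ha₁0.ne'
    have hmul : (k*((n:ℝ))⁻¹) * (1 - k*((n:ℝ))⁻¹)⁻¹ ≤ (k*((n:ℝ))⁻¹) * 2 :=
      mul_le_mul_of_nonneg_left hi ht0.le
    linarith [hkey ▸ h]
  have hnlog : -(2*k) ≤ (n:ℝ) * Real.log (1 - k*((n:ℝ))⁻¹) := by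
    have hmul := mul_le_mul_of_nonneg_left hloga (le_of_lt hn0)
    have hnn : (n:ℝ) * -(2*(k * ((n:ℝ))⁻¹)) = -(2*k) := by
      linear_combination (-2*k) * mul_inv_cancel₀ hn0.ne'
    linarith [hnn ▸ hmul]
  have hlogF1 : -((μ+ε)*x₁) + (n:ℝ) * Real.log (1 - k*((n:ℝ))⁻¹) ≤ Real.log F := by
    have h := Real.log_le_log (by positivity) hFlb
    rwa [Real.log_mul (Real.exp_ne_zero _) (pow_ne_zero n ha₁0.ne'), Real.log_exp,
      Real.log_pow] at h
  have hlow : -(μ/c) - ε'/2 ≤ Real.log F / Real.log n := by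
    rw [le_div_iff₀ hLn]
    have hkey : -((μ+ε)*x₁) - 2*k ≤ Real.log F := by linarith
    have hεdiv : ε / c ≤ ε'/4 := by rw [div_le_iff₀ hc]; linarith
    have hmc : (μ+ε) * x₁ = (μ/c)*Real.log n + (ε/c)*Real.log n := by
      rw [hx₁]; field_simp
    have h3' : 2*k ≤ ε'/4 * Real.log n := by
      rw [div_le_iff₀ hε'] at h3
      linarith
    have hεdivl : (ε/c) * Real.log n ≤ ε'/4 * Real.log n :=
      mul_le_mul_of_nonneg_right hεdiv hLn.le
    linarith [hkey, hmc, h3', hεdivl]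
  -- ### upper bound
  set x₂ : ℝ := (1-δ) * Real.log n / c with hx₂
  have hθ0 : (0:ℝ) < 1 - δ := by linarith
  have hcx₂ : c * x₂ = (1-δ) * Real.log n := by rw [hx₂]; field_simp
  have hx₂X : X ≤ x₂ := by
    rw [hx₂, le_div_iff₀ hc]
    rw [div_le_iff₀ hθ0] at h2
    linarith
  have hx₂0 : 0 ≤ x₂ := le_trans (by linarith) hx₂X
  have hub := (integral_bounds P L hLm hLnn c k hc hk0 hk1 n hx₂0).2
  have htail2 := (htb x₂ hx₂X).2
  set t₂ : ℝ := k * Real.exp (-(c * x₂)) with ht₂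
  have ht₂0 : 0 < t₂ := by positivity
  have ht₂1 : t₂ ≤ 1 := by
    have hex : Real.exp (-(c*x₂)) ≤ 1 :=
      Real.exp_le_one_iff.2 (neg_nonpos.2 (mul_nonneg hc.le hx₂0))
    rw [ht₂]
    exact mul_le_one₀ hk1 (Real.exp_pos _).le hex
  have hnδ : (n:ℝ) * Real.exp (-((1-δ)*Real.log n)) = (n:ℝ)^δ := by
    have h := Real.exp_add (Real.log n) (-((1-δ)*Real.log n))
    rw [Real.exp_log hn0] at h
    rw [← h, Real.rpow_def_of_pos hn0]
    congr 1; ring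
  have hnt : (n:ℝ) * t₂ = k * (n:ℝ)^δ := by
    rw [ht₂, hcx₂, ← hnδ]; ring
  have hcomp : (μ-ε)*x₂ ≤ (n:ℝ) * t₂ := by
    rw [hnt]
    have hrp : (0:ℝ) < (n:ℝ)^δ := Real.rpow_pos_of_pos hn0 δ
    rw [div_lt_iff₀ hrp] at h7
    have hA : (μ-ε)*x₂ ≤ μ/c * Real.log n := by
      rw [hx₂]
      have hAB : (μ-ε)*((1-δ)*Real.log n/c) = ((μ-ε)*(1-δ))*Real.log n/c := by ring
      have hAC : μ/c * Real.log n = μ*Real.log n/c := by ring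
      rw [hAB, hAC]
      have hfac : (μ-ε)*(1-δ) ≤ μ := by
        linarith [mul_nonneg hε0.le (by linarith : (0:ℝ) ≤ 1-δ), mul_nonneg hμ.le hδ0.le]
      exact (div_le_div_iff_of_pos_right hc).2 (mul_le_mul_of_nonneg_right hfac hLn.le)
    have hB : μ/c * Real.log n ≤ μ/c * (k*c/μ * (n:ℝ)^δ) :=
      mul_le_mul_of_nonneg_left h7.le (by positivity)
    have hC : μ/c * (k*c/μ * (n:ℝ)^δ) = k * (n:ℝ)^δ := by
      field_simp
    linarith
  have hFub : F ≤ 2 * Real.exp (-((μ-ε)*x₂)) := by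
    have hp1 : (1 - t₂)^n ≤ Real.exp (-((μ-ε)*x₂)) := by
      have hle := pow_le_pow_left₀ (by linarith : (0:ℝ) ≤ 1 - t₂)
        (by linarith [Real.add_one_le_exp (-t₂)] : 1 - t₂ ≤ Real.exp (-t₂)) n
      rw [← Real.exp_nat_mul] at hle
      refine hle.trans (Real.exp_le_exp.2 ?_)
      linarith [hcomp]
    linarith [hub, htail2]
  have hup : Real.log F / Real.log n ≤ -(μ/c) + 3*ε'/4 := by
    rw [div_le_iff₀ hLn]
    have hlog2 := Real.log_le_log hFpos hFub
    rw [Real.log_mul two_ne_zero (Real.exp_ne_zero _), Real.log_exp] at hlog2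
    have hco : (μ - c*ε'/2) ≤ (μ-ε)*(1-δ) := by
      linarith [mul_nonneg hε0.le hδ0.le, hδμ, hεc]
    have hx₂e : (μ-ε)*x₂ = ((μ-ε)*(1-δ))*(Real.log n)/c := by rw [hx₂]; ring
    have h4' : Real.log 2 ≤ ε'/4 * Real.log n := by
      rw [div_le_iff₀ hε'] at h4
      linarith
    have hmono : (μ - c*ε'/2)*(Real.log n)/c ≤ ((μ-ε)*(1-δ))*(Real.log n)/c := by
      gcongr
    have hid : (μ - c*ε'/2)*(Real.log n)/c = μ/c*Real.log n - ε'/2*Real.log n := by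
      field_simp
    linarith [hlog2, hx₂e, hmono, hid, h4']
  rw [Real.dist_eq]
  rw [abs_lt]
  constructor <;> [linarith; linarith]
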